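/- Let $f_1,\dots,f_q$ be holomorphic functions on a neighborhood $U$ of $z_0 \in \mathbb{C}$, where $f_l(z)=(z-z_0)^{k_l} g_l(z)$ with $g_l$ nowhere vanishing on $U$ and $k_l \ge 0$. Suppose $W$ is a holomorphic function on $U$ of the form $W = c\,W(f_{\mu(0)},\dots,f_{\mu(n)})$ (a constant multiple of the Wronskian of some $n+1$ of the $f_l$ with $c\ne 0$), and suppose $k_l = 0$ for all $l\notin\{\mu(0),\dots,\mu(n)\}$. Then $W$ vanishes at $z_0$ with order at least $\sum_{l : k_l \ge n} (k_l - n)$, i.e., $\operatorname{ord}_{z_0} W \ge \sum_{l=1}^{q} \max(k_l - n, 0)$. -/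

import Mathlib

open Filter

private lemma analyticAt_deriv' {v : ℂ → ℂ} {x : ℂ} (hv : AnalyticAt ℂ v x) :
    AnalyticAt ℂ (deriv v) x := by
  obtain ⟨s, hs, hvs⟩ := hv.eventually_analyticAt.exists_mem
  exact (AnalyticOnNhd.deriv (fun y hy => hvs y hy)) x (mem_of_mem_nhds hs)

private lemma aux_step (z0 : ℂ) (m : ℕ) (v : ℂ → ℂ) (hv : AnalyticAt ℂ v z0) :
    ∃ w, AnalyticAt ℂ w z0 ∧
      ∀ᶠ z in nhds z0, deriv (fun z => (z - z0) ^ m * v z) z = (z - z0) ^ (m - 1) * w z := by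
  match m with
  | 0 =>
    refine ⟨deriv v, analyticAt_deriv' hv, ?_⟩
    filter_upwards with z
    simp
  | s + 1 =>
    refine ⟨fun z => (s + 1 : ℂ) * v z + (z - z0) * deriv v z, ?_, ?_⟩
    · exact (analyticAt_const.mul hv).add
        (((analyticAt_id.sub analyticAt_const).mul (analyticAt_deriv' hv)))
    · filter_upwards [hv.eventually_analyticAt] with z hz
      have h1 : HasDerivAt (fun z : ℂ => (z - z0) ^ (s + 1))
          ((s + 1 : ℂ) * (z - z0) ^ s) z := by
        simpa using (((hasDerivAt_id z).sub_const z0).fun_pow (s + 1))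
      have h2 : HasDerivAt v (deriv v z) z := hz.differentiableAt.hasDerivAt
      have := (h1.fun_mul h2).deriv
      rw [this]
      push_cast
      ring

private lemma aux_iter (z0 : ℂ) (m : ℕ) (u : ℂ → ℂ) (hu : AnalyticAt ℂ u z0)
    (h : ℂ → ℂ) (hh : ∀ᶠ z in nhds z0, h z = (z - z0) ^ m * u z) (i : ℕ) :
    ∃ v, AnalyticAt ℂ v z0 ∧
      ∀ᶠ z in nhds z0, iteratedDeriv i h z = (z - z0) ^ (m - i) * v z := by
  induction i with
  | zero => exact ⟨u, hu, by simpa using hh⟩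
  | succ i ih =>
    obtain ⟨v, hv, hve⟩ := ih
    obtain ⟨w, hw, hwe⟩ := aux_step z0 (m - i) v hv
    refine ⟨w, hw, ?_⟩
    have hde : deriv (iteratedDeriv i h) =ᶠ[nhds z0]
        deriv (fun z => (z - z0) ^ (m - i) * v z) := Filter.EventuallyEq.deriv hve
    filter_upwards [hde, hwe] with z h1 h2
    rw [iteratedDeriv_succ, h1, h2, Nat.sub_sub]

private lemma sum_image_le' {α β : Type*} [DecidableEq β]
    (s : Finset α) (μ : α → β) (F : β → ℕ) :
    ∑ b ∈ s.image μ, F b ≤ ∑ a ∈ s, F (μ a) := by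
  classical
  induction s using Finset.induction with
  | empty => simp
  | insert a s ha ih =>
    rw [Finset.image_insert, Finset.sum_insert ha]
    by_cases hmem : μ a ∈ s.image μ
    · rw [Finset.insert_eq_self.mpr hmem]
      exact le_trans ih (Nat.le_add_left _ _)
    · rw [Finset.sum_insert hmem]
      exact Nat.add_le_add_left ih _

theorem stmt_17 {q n : ℕ} (U : Set ℂ) (hU : IsOpen U) (z0 : ℂ) (hz0 : z0 ∈ U)
    (f g : Fin q → ℂ → ℂ) (k : Fin q → ℕ)
    (hg : ∀ l, AnalyticOnNhd ℂ (g l) U) (hgz : ∀ l, ∀ z ∈ U, g l z ≠ 0)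
    (hfg : ∀ l, ∀ z ∈ U, f l z = (z - z0) ^ (k l) * g l z)
    (μ : Fin (n+1) → Fin q) (c : ℂ) (hc : c ≠ 0)
    (hout : ∀ l : Fin q, l ∉ Set.range μ → k l = 0)
    (W : ℂ → ℂ)
    (hW : ∀ z, W z =
      c * Matrix.det (Matrix.of fun i j : Fin (n+1) => iteratedDeriv (i : ℕ) (f (μ j)) z)) :
    ∃ u : ℂ → ℂ, AnalyticAt ℂ u z0 ∧
      ∀ᶠ z in nhds z0, W z = (z - z0) ^ (∑ l : Fin q, (k l - n)) * u z := by
  have hUz : U ∈ nhds z0 := hU.mem_nhds hz0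
  -- for each j, i : get v with iteratedDeriv i (f (μ j)) = (z-z0)^(k(μ j) - i) * v
  have key : ∀ (j : Fin (n+1)) (i : Fin (n+1)), ∃ v, AnalyticAt ℂ v z0 ∧
      ∀ᶠ z in nhds z0, iteratedDeriv (i : ℕ) (f (μ j)) z
        = (z - z0) ^ (k (μ j) - n) * ((z - z0) ^ ((k (μ j) - i) - (k (μ j) - n)) * v z) := by
    intro j i
    have hh : ∀ᶠ z in nhds z0, f (μ j) z = (z - z0) ^ (k (μ j)) * g (μ j) z := by
      filter_upwards [hUz] with z hz using hfg (μ j) z hz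
    obtain ⟨v, hv, hve⟩ := aux_iter z0 (k (μ j)) (g (μ j)) ((hg (μ j)) z0 hz0)
      (f (μ j)) hh (i : ℕ)
    refine ⟨v, hv, ?_⟩
    filter_upwards [hve] with z hz
    rw [hz, ← mul_assoc, ← pow_add]
    congr 2
    have hle : k (μ j) - n ≤ k (μ j) - (i : ℕ) :=
      Nat.sub_le_sub_left (Nat.lt_succ_iff.mp i.isLt) _
    omega
  choose V hVa hVe using key
  set H : Fin (n+1) → Fin (n+1) → ℂ → ℂ :=
    fun i j z => (z - z0) ^ ((k (μ j) - i) - (k (μ j) - n)) * V j i z with hH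
  set d : ℕ := (∑ j : Fin (n+1), (k (μ j) - n)) - ∑ l : Fin q, (k l - n) with hd
  have hsum : ∑ l : Fin q, (k l - n) + d = ∑ j : Fin (n+1), (k (μ j) - n) := by
    have h1 : ∑ l : Fin q, (k l - n) ≤ ∑ j : Fin (n+1), (k (μ j) - n) := by
      have h2 : ∑ l : Fin q, (k l - n)
          = ∑ l ∈ (Finset.univ.image μ), (k l - n) := by
        symm
        apply Finset.sum_subset (Finset.subset_univ _)
        intro x _ hx
        have : x ∉ Set.range μ := by
          intro ⟨j, hj⟩
          exact hx (Finset.mem_image.mpr ⟨j, Finset.mem_univ j, hj⟩)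
        simp [hout x this]
      rw [h2]
      exact sum_image_le' Finset.univ μ (fun l => k l - n)
    omega
  refine ⟨fun z => (z - z0) ^ d *
    (c * Matrix.det (Matrix.of fun i j : Fin (n+1) => H i j z)), ?_, ?_⟩
  · apply AnalyticAt.mul
    · exact (analyticAt_id.sub analyticAt_const).pow d
    apply AnalyticAt.mul analyticAt_const
    have : ∀ z, Matrix.det (Matrix.of fun i j : Fin (n+1) => H i j z)
        = ∑ σ : Equiv.Perm (Fin (n+1)), (Equiv.Perm.sign σ : ℤ) •
            ∏ i : Fin (n+1), H (σ i) i z := by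
      intro z; rw [Matrix.det_apply]; rfl
    simp only [this]
    apply Finset.analyticAt_fun_sum
    intro σ _
    simp only [zsmul_eq_mul]
    apply AnalyticAt.mul analyticAt_const
    apply Finset.analyticAt_fun_prod
    intro i _
    exact ((analyticAt_id.sub analyticAt_const).pow _).mul (hVa i (σ i))
  · have hall : ∀ᶠ z in nhds z0, ∀ p : Fin (n+1) × Fin (n+1),
        iteratedDeriv (p.1 : ℕ) (f (μ p.2)) z
          = (z - z0) ^ (k (μ p.2) - n) * H p.1 p.2 z := by
      rw [eventually_all]
      exact fun p => hVe p.2 p.1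
    filter_upwards [hall] with z hz
    rw [hW z]
    have hmat : (Matrix.of fun i j : Fin (n+1) => iteratedDeriv (i : ℕ) (f (μ j)) z)
        = Matrix.of fun i j : Fin (n+1) => (z - z0) ^ (k (μ j) - n) * H i j z := by
      ext i j
      exact hz (i, j)
    have hdr := Matrix.det_mul_row (fun j => (z - z0) ^ (k (μ j) - n)) (Matrix.of fun i j => H i j z)
    simp only [Matrix.of_apply] at hdr
    rw [hmat, hdr, Finset.prod_pow_eq_pow_sum, ← hsum, pow_add]
    have hcomm : ∀ a b dd : ℂ, c * (a * b * dd) = a * (b * (c * dd)) :=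
      fun a b dd => by ring
    exact hcomm _ _ _
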